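/- Let t ∈ ℝ, S′ ∈ ℝ \ {0}, and let U : ℝ → ℂ be a differentiable function satisfying i·S′·U′(t₁) + |U(t₁)|²·U(t₁) − t·U(t₁) = 1 for all t₁. Then the quantity E(t₁) = (1/2)|U(t₁)|⁴ − t·|U(t₁)|² − (U(t₁) + conj(U(t₁))) is constant in t₁. -/
import Mathlib


open Complex

/-- First integral of the leading-order fast-oscillating equation: along any
solution of `i·S′·U′ + |U|²U − tU = 1` (with `t` frozen and `S′` real nonzero),
the energy `E = (1/2)|U|⁴ − t|U|² − (U + conj U)` is constant. -/
theorem fast_oscillating_first_integral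
    (t S' : ℝ) (hS' : S' ≠ 0) (U U' : ℝ → ℂ)
    (hU : ∀ t₁ : ℝ, HasDerivAt U (U' t₁) t₁)
    (hODE : ∀ t₁ : ℝ,
      I * (S' : ℂ) * U' t₁ + (U t₁ * (starRingEnd ℂ) (U t₁)) * U t₁
        - (t : ℂ) * U t₁ = 1) :
    ∀ t₁ t₂ : ℝ,
      (1/2) * (U t₁ * (starRingEnd ℂ) (U t₁))^2
          - (t : ℂ) * (U t₁ * (starRingEnd ℂ) (U t₁))
          - (U t₁ + (starRingEnd ℂ) (U t₁))
        = (1/2) * (U t₂ * (starRingEnd ℂ) (U t₂))^2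
          - (t : ℂ) * (U t₂ * (starRingEnd ℂ) (U t₂))
          - (U t₂ + (starRingEnd ℂ) (U t₂)) := by
  set E : ℝ → ℂ := fun s =>
    (1/2) * (U s * (starRingEnd ℂ) (U s))^2
      - (t : ℂ) * (U s * (starRingEnd ℂ) (U s))
      - (U s + (starRingEnd ℂ) (U s)) with hE
  have key : ∀ s : ℝ, HasDerivAt E 0 s := by
    intro s
    have hc : HasDerivAt (fun x => (starRingEnd ℂ) (U x)) ((starRingEnd ℂ) (U' s)) s :=
      (hU s).star
    have hm : HasDerivAt (fun x => U x * (starRingEnd ℂ) (U x))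
        (U' s * (starRingEnd ℂ) (U s) + U s * (starRingEnd ℂ) (U' s)) s := (hU s).mul hc
    have hD : HasDerivAt E
        ((1/2) * (2 * (U s * (starRingEnd ℂ) (U s))
            * (U' s * (starRingEnd ℂ) (U s) + U s * (starRingEnd ℂ) (U' s)))
          - (t : ℂ) * (U' s * (starRingEnd ℂ) (U s) + U s * (starRingEnd ℂ) (U' s))
          - (U' s + (starRingEnd ℂ) (U' s))) s := by
      have hD0 : HasDerivAt (fun x =>
          (1/2 : ℂ) * ((U x * (starRingEnd ℂ) (U x)) * (U x * (starRingEnd ℂ) (U x)))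
            - (t : ℂ) * (U x * (starRingEnd ℂ) (U x))
            - (U x + (starRingEnd ℂ) (U x))) _ s :=
        ((HasDerivAt.const_mul (1/2 : ℂ) (hm.mul hm)).sub
          (HasDerivAt.const_mul (t : ℂ) hm)).sub ((hU s).add hc)
      have hEF : E = fun x =>
          (1/2 : ℂ) * ((U x * (starRingEnd ℂ) (U x)) * (U x * (starRingEnd ℂ) (U x)))
            - (t : ℂ) * (U x * (starRingEnd ℂ) (U x))
            - (U x + (starRingEnd ℂ) (U x)) := by
        funext x; simp [hE]; ring
      rw [hEF]
      convert hD0 using 1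
      ring
    have h1 := hODE s
    have h2 := congrArg (starRingEnd ℂ) (hODE s)
    simp only [map_add, map_sub, map_mul, map_one, Complex.conj_I, Complex.conj_conj,
      Complex.conj_ofReal] at h2
    have hzero : ((1/2 : ℂ) * (2 * (U s * (starRingEnd ℂ) (U s))
            * (U' s * (starRingEnd ℂ) (U s) + U s * (starRingEnd ℂ) (U' s)))
          - (t : ℂ) * (U' s * (starRingEnd ℂ) (U s) + U s * (starRingEnd ℂ) (U' s))
          - (U' s + (starRingEnd ℂ) (U' s))) = 0 := by
      linear_combination U' s * h2 + (starRingEnd ℂ) (U' s) * h1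
    rwa [hzero] at hD
  intro t₁ t₂
  exact is_const_of_deriv_eq_zero (fun x => (key x).differentiableAt)
    (fun x => (key x).deriv) t₁ t₂
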